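/- The action of the circle group S^1 = {z ∈ ℂ : |z| = 1} on the special unitary group SU(3) given by z · A = diag(z^{21}, z^{21}, z^{-2}) · A · diag(z^{-20}, z^{-20}, 1) is free: if diag(z^{21}, z^{21}, z^{-2}) · A · diag(z^{-20}, z^{-20}, 1) = A for some A ∈ SU(3), then z = 1. -/

import Mathlib

/-- The circle action on `SU(3)` with Eschenburg parameters `(21, 21, -2; 20, 20, 0)` is free. -/
theorem eschenburg_action_free_21_21_m2_20_20_0 :
    ∀ z : ℂ, ‖z‖ = 1 →
    ∀ A : Matrix.specialUnitaryGroup (Fin 3) ℂ,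
      Matrix.diagonal ![z ^ (21 : ℤ), z ^ (21 : ℤ), z ^ (-2 : ℤ)] *
          (A : Matrix (Fin 3) (Fin 3) ℂ) *
          Matrix.diagonal ![z ^ (-20 : ℤ), z ^ (-20 : ℤ), 1] = (A : Matrix (Fin 3) (Fin 3) ℂ) →
      z = 1 := by
  intro z hz A hA
  by_contra hz1
  have hz0 : z ≠ 0 := by
    intro h; rw [h] at hz; simp at hz
  have hfac : z ^ (21 : ℕ) * ((z : ℂ) ^ (20 : ℕ))⁻¹ = z := by
    field_simp
  have hzero : ∀ i j : Fin 3,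
      z ^ (21 : ℕ) * (A : Matrix (Fin 3) (Fin 3) ℂ) i j * ((z : ℂ) ^ (20 : ℕ))⁻¹ =
        (A : Matrix (Fin 3) (Fin 3) ℂ) i j →
      (A : Matrix (Fin 3) (Fin 3) ℂ) i j = 0 := by
    intro i j h
    rw [mul_comm (z ^ 21) _, mul_assoc, hfac] at h
    have : ((A : Matrix (Fin 3) (Fin 3) ℂ) i j) * (z - 1) = 0 := by
      rw [mul_sub, h]; ring
    rcases mul_eq_zero.mp this with h' | h'
    · exact h'
    · exact absurd (by linear_combination h') hz1
  have h00 := congrFun (congrFun hA 0) 0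
  have h01 := congrFun (congrFun hA 0) 1
  have h10 := congrFun (congrFun hA 1) 0
  have h11 := congrFun (congrFun hA 1) 1
  simp [Matrix.mul_apply, Matrix.diagonal_apply, Fin.sum_univ_succ] at h00 h01 h10 h11
  have e00 := hzero 0 0 h00
  have e01 := hzero 0 1 h01
  have e10 := hzero 1 0 h10
  have e11 := hzero 1 1 h11
  have hdet : Matrix.det (A : Matrix (Fin 3) (Fin 3) ℂ) = 1 := A.2.2
  rw [Matrix.det_fin_three, e00, e01, e10, e11] at hdet
  simp at hdet
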